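/- Rawlings's insertion lemma: there is a bijection φ from S_{n-1} × {0,1,…,n-1} to S_n such that for every π ∈ S_{n-1} and 0 ≤ c ≤ n-1, rdes(φ(π,c)) = rdes(π) if 0 ≤ c ≤ rdes(π)+r-1 and rdes(φ(π,c)) = rdes(π)+1 otherwise, and rmaj(φ(π,c)) = rmaj(π) + c. -/

import Mathlib

open Finset Equiv

namespace PaperStat

noncomputable section

attribute [local instance] Classical.propDecidable

/-- number of inversions of a permutation (pairs i<j with π i > π j) -/
def inv {n : ℕ} (π : Perm (Fin n)) : ℕ :=
  (univ.filter (fun p : Fin n × Fin n => p.1 < p.2 ∧ π p.2 < π p.1)).card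

/-- pairs (i, i+1) forming an r-descent -/
def desSet {n : ℕ} (r : ℕ) (π : Perm (Fin n)) : Finset (Fin n × Fin n) :=
  univ.filter (fun p : Fin n × Fin n =>
    (p.2 : ℕ) = (p.1 : ℕ) + 1 ∧ (π p.2 : ℕ) + r ≤ (π p.1 : ℕ))

/-- r-descent number -/
def rdes {n : ℕ} (r : ℕ) (π : Perm (Fin n)) : ℕ := (desSet r π).card

/-- r-major index: sum of (1-based) r-descent positions plus |rInv| -/
def rmaj {n : ℕ} (r : ℕ) (π : Perm (Fin n)) : ℕ :=
  (∑ p ∈ desSet r π, ((p.1 : ℕ) + 1)) +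
  (univ.filter (fun p : Fin n × Fin n =>
      p.1 < p.2 ∧ (π p.2 : ℕ) < (π p.1 : ℕ) ∧ (π p.1 : ℕ) < (π p.2 : ℕ) + r)).card

/-- descent number -/
def des {n : ℕ} (π : Perm (Fin n)) : ℕ := rdes 1 π

/-- major index -/
def maj {n : ℕ} (π : Perm (Fin n)) : ℕ := ∑ p ∈ desSet 1 π, ((p.1 : ℕ) + 1)

/-- i is a g-gap L-level excedance place (1-based: π_i ≥ i+g and π_i ≥ L) -/
def excp {n : ℕ} (g L : ℕ) (π : Perm (Fin n)) (i : Fin n) : Prop :=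
  (i : ℕ) + g ≤ (π i : ℕ) ∧ L ≤ (π i : ℕ) + 1

/-- g-gap ℓ-level excedance number: positions i ≥ ℓ (1-based) with π_i ≥ i+g -/
def gexc {n : ℕ} (g l : ℕ) (π : Perm (Fin n)) : ℕ :=
  (univ.filter (fun i : Fin n => l ≤ (i : ℕ) + 1 ∧ (i : ℕ) + g ≤ (π i : ℕ))).card

/-- inversions of the subword of π on positions satisfying P -/
def invOn {n : ℕ} (π : Perm (Fin n)) (P : Fin n → Prop) : ℕ :=
  (univ.filter (fun p : Fin n × Fin n =>
    P p.1 ∧ P p.2 ∧ p.1 < p.2 ∧ π p.2 < π p.1)).card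

/-- g-gap L-level Denert statistic: Σ_{i ∈ gExcp}(i+g-1) (1-based) + inversions
of the excedance subword + inversions of the non-excedance subword -/
def gden {n : ℕ} (g L : ℕ) (π : Perm (Fin n)) : ℕ :=
  (∑ i ∈ univ.filter (fun i : Fin n => excp g L π i), ((i : ℕ) + g)) +
  invOn π (fun i => excp g L π i) +
  invOn π (fun i => ¬ excp g L π i)

namespace Raw

/-- descent set of a word of length N -/
def dS (r N : ℕ) (v : ℕ → ℕ) : Finset ℕ :=
  (Finset.range (N-1)).filter fun i => v (i+1) + r ≤ v i

def nmaj (r N : ℕ) (v : ℕ → ℕ) : ℕ := ∑ i ∈ dS r N v, (i+1)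

def nInv (r N : ℕ) (v : ℕ → ℕ) : ℕ :=
  ((Finset.range N ×ˢ Finset.range N).filter
    fun p : ℕ × ℕ => p.1 < p.2 ∧ v p.2 < v p.1 ∧ v p.1 < v p.2 + r).card

def nrmaj (r N : ℕ) (v : ℕ → ℕ) : ℕ := nmaj r N v + nInv r N v

/-- insert letter m at slot k -/
def wins (u : ℕ → ℕ) (m k : ℕ) : ℕ → ℕ :=
  fun i => if i < k then u i else if i = k then m else u (i-1)

def B (r m : ℕ) (u : ℕ → ℕ) (k : ℕ) : ℕ :=
  ((Finset.range m).filter fun b => k ≤ b ∧ m < u b + r).card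

def pres (r m : ℕ) (u : ℕ → ℕ) (k : ℕ) : Prop :=
  k = m ∨ (1 ≤ k ∧ k - 1 ∈ dS r m u) ∨ (k < m ∧ m < u k + r)

def Δ (r m : ℕ) (u : ℕ → ℕ) (k : ℕ) : ℕ :=
  ((dS r m u).filter fun a => k ≤ a).card + B r m u k +
  (if 1 ≤ k ∧ k - 1 ∈ dS r m u then 1
   else if k < m ∧ u k + r ≤ m then k + 1 else 0)

section core
variable {r m : ℕ} {u : ℕ → ℕ} (hr : 1 ≤ r) (h1 : ∀ i < m, u i < m)

lemma mem_dS {N : ℕ} {v : ℕ → ℕ} {i : ℕ} :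
    i ∈ dS r N v ↔ i + 1 < N ∧ v (i+1) + r ≤ v i := by
  simp [dS, Finset.mem_filter, Finset.mem_range]; omega

include hr h1 in
lemma dS_wins {k : ℕ} (hk : k ≤ m) :
    dS r (m+1) (wins u m k) =
      (((dS r m u).filter fun a => a + 1 < k) ∪
        ((dS r m u).filter fun a => k ≤ a).image (· + 1)) ∪
      (if k < m ∧ u k + r ≤ m then {k} else ∅) := by
  ext i
  simp only [mem_dS, Finset.mem_union, Finset.mem_filter, Finset.mem_image]
  constructor
  · rintro ⟨hi, hd⟩
    rcases lt_trichotomy i k with h | h | h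
    · rcases eq_or_lt_of_le (Nat.succ_le_of_lt h) with h2 | h2
      · -- i + 1 = k : impossible descent
        exfalso
        have : wins u m k i = u i := by simp [wins, h]
        have h3 : wins u m k (i+1) = m := by
          simp only [wins, if_neg (by omega : ¬ i + 1 < k), if_pos (by omega : i + 1 = k)]
        rw [this, h3] at hd
        have := h1 i (by omega)
        omega
      · left; left
        have e1 : wins u m k i = u i := by simp [wins, h]
        have e2 : wins u m k (i+1) = u (i+1) := by simp [wins]; omega
        rw [e1, e2] at hd
        exact ⟨⟨by omega, hd⟩, h2⟩
    · right
      have e1 : wins u m k i = m := by simp [wins, h]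
      have e2 : wins u m k (i+1) = u i := by
        simp only [wins, if_neg (by omega : ¬ i + 1 < k), if_neg (by omega : ¬ i + 1 = k)]
        congr 1 <;> omega
      rw [e1, e2] at hd
      have hkm : k < m := by omega
      subst h
      rw [if_pos ⟨hkm, hd⟩]
      simp
    · left; right
      refine ⟨i - 1, ⟨⟨?_, ?_⟩, by omega⟩, by omega⟩
      · omega
      · have e1 : wins u m k i = u (i-1) := by
          simp only [wins, if_neg (by omega : ¬ i < k), if_neg (by omega : ¬ i = k)]
        have e2 : wins u m k (i+1) = u i := by
          simp only [wins, if_neg (by omega : ¬ i + 1 < k), if_neg (by omega : ¬ i + 1 = k)]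
          congr 1 <;> omega
        rw [e1, e2] at hd
        have : i - 1 + 1 = i := by omega
        rw [this]; exact hd
  · intro h
    rcases h with (⟨⟨hi, hd⟩, hik⟩ | ⟨a, ⟨⟨ha, hd⟩, hka⟩, rfl⟩) | hsing
    · have e1 : wins u m k i = u i := by simp [wins]; omega
      have e2 : wins u m k (i+1) = u (i+1) := by simp [wins]; omega
      rw [e1, e2]; exact ⟨by omega, hd⟩
    · have e1 : wins u m k (a+1) = u a := by
        simp only [wins, if_neg (by omega : ¬ a + 1 < k), if_neg (by omega : ¬ a + 1 = k)]
        congr 1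
      have e2 : wins u m k (a+1+1) = u (a+1) := by
        simp only [wins, if_neg (by omega : ¬ a + 1 + 1 < k), if_neg (by omega : ¬ a + 1 + 1 = k)]
        congr 1
      rw [e1, e2]; exact ⟨by omega, hd⟩
    · split_ifs at hsing with hc
      · simp only [Finset.mem_singleton] at hsing
        have hik : i = k := hsing
        have e1 : wins u m k i = m := by simp [wins, hik]
        have e2 : wins u m k (i+1) = u i := by
          simp only [wins, if_neg (by omega : ¬ i + 1 < k), if_neg (by omega : ¬ i + 1 = k)]
          congr 1 <;> omega
        rw [e1, e2]; exact ⟨by omega, by rw [hik]; exact hc.2⟩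
      · simp at hsing


include hr h1 in
lemma card_dS_wins {k : ℕ} (hk : k ≤ m) :
    (dS r (m+1) (wins u m k)).card =
      ((dS r m u).filter fun a => a + 1 < k).card
      + ((dS r m u).filter fun a => k ≤ a).card
      + (if k < m ∧ u k + r ≤ m then 1 else 0) := by
  classical
  rw [dS_wins hr h1 hk]
  have hdisj1 : Disjoint ((dS r m u).filter fun a => a + 1 < k)
      (((dS r m u).filter fun a => k ≤ a).image (· + 1)) := by
    rw [Finset.disjoint_left]
    rintro x hx hx2
    simp only [Finset.mem_filter, Finset.mem_image] at hx hx2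
    obtain ⟨a, ⟨_, ha⟩, rfl⟩ := hx2
    omega
  have hdisj2 : Disjoint
      ((((dS r m u).filter fun a => a + 1 < k)) ∪
        ((dS r m u).filter fun a => k ≤ a).image (· + 1))
      (if k < m ∧ u k + r ≤ m then ({k} : Finset ℕ) else ∅) := by
    rw [Finset.disjoint_right]
    intro x hx hx2
    split_ifs at hx with hc
    · simp only [Finset.mem_singleton] at hx
      subst hx
      simp only [Finset.mem_union, Finset.mem_filter, Finset.mem_image] at hx2
      rcases hx2 with ⟨_, h⟩ | ⟨a, ⟨_, ha⟩, h⟩ <;> omega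
    · simp at hx
  rw [Finset.card_union_of_disjoint hdisj2, Finset.card_union_of_disjoint hdisj1,
    Finset.card_image_of_injective _ (add_left_injective 1)]
  congr 1
  split_ifs <;> simp

include hr h1 in
lemma sum_dS_wins {k : ℕ} (hk : k ≤ m) :
    nmaj r (m+1) (wins u m k) =
      (∑ a ∈ (dS r m u).filter (fun a => a + 1 < k), (a+1))
      + ((∑ a ∈ (dS r m u).filter (fun a => k ≤ a), (a+1))
          + ((dS r m u).filter fun a => k ≤ a).card)
      + (if k < m ∧ u k + r ≤ m then k + 1 else 0) := by
  classical
  rw [nmaj, dS_wins hr h1 hk]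
  have hdisj1 : Disjoint ((dS r m u).filter fun a => a + 1 < k)
      (((dS r m u).filter fun a => k ≤ a).image (· + 1)) := by
    rw [Finset.disjoint_left]
    rintro x hx hx2
    simp only [Finset.mem_filter, Finset.mem_image] at hx hx2
    obtain ⟨a, ⟨_, ha⟩, rfl⟩ := hx2
    omega
  have hdisj2 : Disjoint
      ((((dS r m u).filter fun a => a + 1 < k)) ∪
        ((dS r m u).filter fun a => k ≤ a).image (· + 1))
      (if k < m ∧ u k + r ≤ m then ({k} : Finset ℕ) else ∅) := by
    rw [Finset.disjoint_right]
    intro x hx hx2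
    split_ifs at hx with hc
    · simp only [Finset.mem_singleton] at hx
      subst hx
      simp only [Finset.mem_union, Finset.mem_filter, Finset.mem_image] at hx2
      rcases hx2 with ⟨_, h⟩ | ⟨a, ⟨_, ha⟩, h⟩ <;> omega
    · simp at hx
  rw [Finset.sum_union hdisj2, Finset.sum_union hdisj1,
    Finset.sum_image (by intro a _ b _ h; simp only at h; omega)]
  congr 1
  · congr 1
    rw [Finset.card_eq_sum_ones, ← Finset.sum_add_distrib]
  · split_ifs <;> simp

lemma mid_eq {k : ℕ} :
    (dS r m u).filter (fun a => a + 1 = k) =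
      if 1 ≤ k ∧ k - 1 ∈ dS r m u then ({k-1} : Finset ℕ) else ∅ := by
  classical
  ext a
  by_cases hc : 1 ≤ k ∧ k - 1 ∈ dS r m u
  · rw [if_pos hc]
    simp only [Finset.mem_filter, Finset.mem_singleton]
    constructor
    · rintro ⟨_, h⟩; omega
    · rintro rfl; exact ⟨hc.2, by omega⟩
  · rw [if_neg hc]
    simp only [Finset.mem_filter, Finset.notMem_empty, iff_false]
    rintro ⟨ha, h2⟩
    exact hc ⟨by omega, by rwa [show k - 1 = a by omega]⟩

lemma sum_D_split (k : ℕ) (f : ℕ → ℕ) :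
    ∑ a ∈ dS r m u, f a =
      (∑ a ∈ (dS r m u).filter (fun a => a + 1 < k), f a)
      + (∑ a ∈ (dS r m u).filter (fun a => k ≤ a), f a)
      + (if 1 ≤ k ∧ k - 1 ∈ dS r m u then f (k-1) else 0) := by
  classical
  rw [← Finset.sum_filter_add_sum_filter_not (dS r m u) (fun a => a + 1 < k) f]
  have hsplit : (dS r m u).filter (fun a => ¬ a + 1 < k) =
      (dS r m u).filter (fun a => k ≤ a) ∪ (dS r m u).filter (fun a => a + 1 = k) := by
    ext a
    by_cases hD : a ∈ dS r m u <;> simp [hD] <;> omega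
  have hdisj : Disjoint ((dS r m u).filter (fun a => k ≤ a))
      ((dS r m u).filter (fun a => a + 1 = k)) := by
    rw [Finset.disjoint_left]
    intro x hx hx2
    simp only [Finset.mem_filter] at hx hx2
    omega
  rw [hsplit, Finset.sum_union hdisj, mid_eq, add_assoc]
  congr 1
  congr 1
  split_ifs <;> simp


include hr h1 in
lemma wins_le {k : ℕ} (hk : k ≤ m) : ∀ x, x ≤ m → wins u m k x ≤ m := by
  intro x hx
  by_cases h1x : x < k
  · have : wins u m k x = u x := by simp [wins, h1x]
    rw [this]; exact le_of_lt (h1 x (by omega))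
  · by_cases h2x : x = k
    · simp [wins, h2x]
    · have : wins u m k x = u (x-1) := by simp [wins, h1x, h2x]
      rw [this]; exact le_of_lt (h1 _ (by omega))

lemma wins_lt_of_lt {k x : ℕ} (hx : x < k) : wins u m k x = u x := by
  simp [wins, hx]

lemma wins_of_gt {k x : ℕ} (hx : k < x) : wins u m k x = u (x - 1) := by
  simp only [wins, if_neg (by omega : ¬ x < k), if_neg (by omega : ¬ x = k)]

lemma wins_self {k : ℕ} : wins u m k k = m := by simp [wins]

include hr h1 in
lemma ninv_wins {k : ℕ} (hk : k ≤ m) :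
    nInv r (m+1) (wins u m k) = nInv r m u + B r m u k := by
  classical
  set w := wins u m k with hw
  set T := Finset.range (m+1) ×ˢ Finset.range (m+1) with hT
  set P : ℕ × ℕ → Prop := fun p => p.1 < p.2 ∧ w p.2 < w p.1 ∧ w p.1 < w p.2 + r with hP
  have key := Finset.card_filter_add_card_filter_not
      (s := T.filter P) (p := fun p : ℕ × ℕ => p.1 = k)
  have hA : ((T.filter P).filter (fun p => p.1 = k)).card = B r m u k := by
    rw [Finset.filter_filter]
    apply Finset.card_nbij' (i := fun p => p.2 - 1) (j := fun b => (k, b+1))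
    · rintro ⟨i, j⟩ hp
      simp only [Finset.mem_coe, hT, hP, Finset.mem_filter, Finset.mem_product, Finset.mem_range] at hp
      obtain ⟨⟨hi, hj⟩, ⟨hlt, hv1, hv2⟩, hik⟩ := hp
      subst hik
      have hj2 : w j = u (j-1) := wins_of_gt hlt
      have hkk : w i = m := wins_self
      rw [hj2, hkk] at hv2
      simp only [Finset.mem_coe, B, Finset.mem_filter, Finset.mem_range]
      exact ⟨by omega, by omega, hv2⟩
    · intro b hb
      simp only [Finset.mem_coe, B, Finset.mem_filter, Finset.mem_range] at hb
      obtain ⟨hbm, hkb, hbig⟩ := hb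
      simp only [Finset.mem_coe, hT, hP, Finset.mem_filter, Finset.mem_product, Finset.mem_range]
      have e1 : w (b+1) = u b := by rw [hw, wins_of_gt (by omega)]; simp
      have e2 : w k = m := wins_self
      refine ⟨⟨by omega, by omega⟩, ⟨by omega, ?_, ?_⟩, by trivial⟩
      · rw [e1, e2]; exact h1 b hbm
      · rw [e1, e2]; exact hbig
    · rintro ⟨i, j⟩ hp
      simp only [Finset.mem_coe, hT, hP, Finset.mem_filter, Finset.mem_product, Finset.mem_range] at hp
      obtain ⟨⟨hi, hj⟩, ⟨hlt, _, _⟩, hik⟩ := hp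
      subst hik
      simp only
      rw [show j - 1 + 1 = j by omega]
    · intro b hb
      simp only
      omega

  have hBc : ((T.filter P).filter (fun p => ¬ p.1 = k)).card = nInv r m u := by
    rw [Finset.filter_filter]
    have target_eq : nInv r m u = ((Finset.range m ×ˢ Finset.range m).filter
        (fun p : ℕ × ℕ => p.1 < p.2 ∧ u p.2 < u p.1 ∧ u p.1 < u p.2 + r)).card := rfl
    rw [target_eq]
    have wval : ∀ x, x ≤ m → x ≠ k → w x = u (if x < k then x else x - 1) := by
      intro x hx hxk
      by_cases hc : x < k
      · rw [if_pos hc]; exact wins_lt_of_lt hc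
      · rw [if_neg hc]; exact wins_of_gt (by omega)
    have p2ne : ∀ i j : ℕ, i ≤ m → j ≤ m → P (i, j) → i ≠ k → j ≠ k := by
      intro i j hi hj hPp hik hjk
      rw [hP] at hPp
      obtain ⟨hlt, hv1, hv2⟩ := hPp
      simp only at hv1 hv2
      have h3 : w j = m := by rw [hjk]; exact wins_self
      have h4 : w i ≤ m := wins_le hr h1 hk i hi
      omega
    apply Finset.card_nbij'
      (i := fun p => (if p.1 < k then p.1 else p.1 - 1, if p.2 < k then p.2 else p.2 - 1))
      (j := fun q => (if q.1 < k then q.1 else q.1 + 1, if q.2 < k then q.2 else q.2 + 1))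
    · rintro ⟨i, j⟩ hp
      simp only [Finset.mem_coe, hT, hP, Finset.mem_filter, Finset.mem_product, Finset.mem_range] at hp
      obtain ⟨⟨hi, hj⟩, hPp, hik⟩ := hp
      have hjk : j ≠ k := p2ne i j (by omega) (by omega) hPp hik
      obtain ⟨hlt, hv1, hv2⟩ := hPp
      rw [wval i (by omega) hik, wval j (by omega) hjk] at hv1 hv2
      simp only [Finset.mem_coe, Finset.mem_filter, Finset.mem_product, Finset.mem_range]
      refine ⟨⟨?_, ?_⟩, ?_, hv1, hv2⟩ <;> split_ifs <;> omega
    · rintro ⟨a, b⟩ hq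
      simp only [Finset.mem_coe, Finset.mem_filter, Finset.mem_product, Finset.mem_range] at hq
      obtain ⟨⟨ha, hb⟩, hlt, hv1, hv2⟩ := hq
      have e1 : w (if a < k then a else a + 1) = u a := by
        rw [hw]; split_ifs with hc
        · exact wins_lt_of_lt hc
        · rw [wins_of_gt (by omega)]; simp
      have e2 : w (if b < k then b else b + 1) = u b := by
        rw [hw]; split_ifs with hc
        · exact wins_lt_of_lt hc
        · rw [wins_of_gt (by omega)]; simp
      simp only [Finset.mem_coe, hT, hP, Finset.mem_filter, Finset.mem_product, Finset.mem_range]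
      rw [e1, e2]
      refine ⟨⟨?_, ?_⟩, ⟨?_, hv1, hv2⟩, ?_⟩ <;> split_ifs <;> omega
    · rintro ⟨i, j⟩ hp
      simp only [Finset.mem_coe, hT, hP, Finset.mem_filter, Finset.mem_product, Finset.mem_range] at hp
      obtain ⟨⟨hi, hj⟩, hPp, hik⟩ := hp
      have hjk : j ≠ k := p2ne i j (by omega) (by omega) hPp hik
      have : (if (if i < k then i else i - 1) < k then (if i < k then i else i - 1)
          else (if i < k then i else i - 1) + 1) = i := by split_ifs <;> omega
      have h2 : (if (if j < k then j else j - 1) < k then (if j < k then j else j - 1)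
          else (if j < k then j else j - 1) + 1) = j := by split_ifs <;> omega
      simp only [Prod.mk.injEq]
      exact ⟨this, h2⟩
    · rintro ⟨a, b⟩ hq
      have : (if (if a < k then a else a + 1) < k then (if a < k then a else a + 1)
          else (if a < k then a else a + 1) - 1) = a := by split_ifs <;> omega
      have h2 : (if (if b < k then b else b + 1) < k then (if b < k then b else b + 1)
          else (if b < k then b else b + 1) - 1) = b := by split_ifs <;> omega
      simp only [Prod.mk.injEq]
      exact ⟨this, h2⟩
  have lhs_eq : nInv r (m+1) w = (T.filter P).card := rfl
  rw [lhs_eq, ← key, hA, hBc]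
  omega


include h1 in
lemma mid_small {k : ℕ} (hmid : 1 ≤ k ∧ k - 1 ∈ dS r m u) : k < m ∧ u k + r ≤ m := by
  obtain ⟨hk1, hmem⟩ := hmid
  rw [mem_dS] at hmem
  obtain ⟨h2, h3⟩ := hmem
  have h4 := h1 (k-1) (by omega)
  rw [show k - 1 + 1 = k by omega] at h2 h3
  exact ⟨by omega, by omega⟩

lemma card_D_split (k : ℕ) :
    (dS r m u).card =
      ((dS r m u).filter (fun a => a + 1 < k)).card
      + ((dS r m u).filter (fun a => k ≤ a)).card
      + (if 1 ≤ k ∧ k - 1 ∈ dS r m u then 1 else 0) := by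
  classical
  have h := sum_D_split (r := r) (m := m) (u := u) k (fun _ => 1)
  simp only [Finset.sum_const, smul_eq_mul, mul_one] at h
  rw [h]

lemma nmaj_split (k : ℕ) :
    nmaj r m u =
      (∑ a ∈ (dS r m u).filter (fun a => a + 1 < k), (a+1))
      + (∑ a ∈ (dS r m u).filter (fun a => k ≤ a), (a+1))
      + (if 1 ≤ k ∧ k - 1 ∈ dS r m u then k else 0) := by
  classical
  unfold nmaj
  rw [sum_D_split (r := r) (m := m) (u := u) k (fun a => a + 1)]
  congr 1
  split_ifs with h
  · omega
  · rfl

include hr h1 in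
lemma rdes_wins {k : ℕ} (hk : k ≤ m) :
    (dS r (m+1) (wins u m k)).card
      = (dS r m u).card + (if pres r m u k then 0 else 1) := by
  classical
  rw [card_dS_wins hr h1 hk, card_D_split (r := r) (m := m) (u := u) k]
  by_cases hmid : 1 ≤ k ∧ k - 1 ∈ dS r m u
  · have hsm := mid_small h1 hmid
    have hpres : pres r m u k := Or.inr (Or.inl hmid)
    rw [if_pos hmid, if_pos hsm, if_pos hpres]
  · rw [if_neg hmid]
    by_cases hsm : k < m ∧ u k + r ≤ m
    · have hnp : ¬ pres r m u k := by
        intro hp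
        rcases hp with h | h | h
        · omega
        · exact hmid h
        · omega
      rw [if_pos hsm, if_neg hnp]
    · have hpres : pres r m u k := by
        rcases Nat.lt_or_ge k m with h | h
        · right; right; exact ⟨h, by omega⟩
        · left; omega
      rw [if_neg hsm, if_pos hpres]

include hr h1 in
lemma nrmaj_wins {k : ℕ} (hk : k ≤ m) :
    nrmaj r (m+1) (wins u m k) = nrmaj r m u + Δ r m u k := by
  classical
  unfold nrmaj
  rw [sum_dS_wins hr h1 hk, ninv_wins hr h1 hk,
    nmaj_split (r := r) (m := m) (u := u) k]
  unfold Δ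
  by_cases hmid : 1 ≤ k ∧ k - 1 ∈ dS r m u
  · have hsm := mid_small h1 hmid
    rw [if_pos hmid, if_pos hmid, if_pos hsm]
    omega
  · rw [if_neg hmid, if_neg hmid]
    omega

/-- preserving slots -/
def K0 (r m : ℕ) (u : ℕ → ℕ) : Finset ℕ := (Finset.range (m+1)).filter (pres r m u)

lemma mem_K0 {x : ℕ} : x ∈ K0 r m u ↔ x ≤ m ∧ pres r m u x := by
  simp [K0, Finset.mem_filter, Finset.mem_range]

lemma m_mem_K0 : m ∈ K0 r m u := mem_K0.2 ⟨le_refl m, Or.inl rfl⟩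

lemma filter_succ_card (k : ℕ) :
    ((dS r m u).filter fun a => k ≤ a + 1).card
      = ((dS r m u).filter fun a => k ≤ a).card
        + (if 1 ≤ k ∧ k - 1 ∈ dS r m u then 1 else 0) := by
  classical
  have hu : (dS r m u).filter (fun a => k ≤ a + 1)
      = (dS r m u).filter (fun a => k ≤ a) ∪ (dS r m u).filter (fun a => a + 1 = k) := by
    ext a; by_cases hD : a ∈ dS r m u <;> simp [hD] <;> omega
  have hd : Disjoint ((dS r m u).filter (fun a => k ≤ a))
      ((dS r m u).filter (fun a => a + 1 = k)) := by
    rw [Finset.disjoint_left]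
    intro x hx hx2
    simp only [Finset.mem_filter] at hx hx2
    omega
  rw [hu, Finset.card_union_of_disjoint hd, mid_eq]
  congr 1
  split_ifs <;> simp

include hr h1 in
lemma C1 {k : ℕ} (hk : k ≤ m) :
    ((dS r m u).filter fun a => k ≤ a).card + B r m u k
      + (if 1 ≤ k ∧ k - 1 ∈ dS r m u then 1 else 0)
      = ((K0 r m u).filter fun x => k ≤ x ∧ x < m).card := by
  classical
  have hset : (K0 r m u).filter (fun x => k ≤ x ∧ x < m)
      = ((dS r m u).filter fun a => k ≤ a + 1).image (· + 1)
        ∪ (Finset.range m).filter (fun b => k ≤ b ∧ m < u b + r) := by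
    ext x
    simp only [K0, pres, Finset.mem_filter, Finset.mem_range, Finset.mem_union,
      Finset.mem_image]
    constructor
    · rintro ⟨⟨hx1, hpres⟩, hkx, hxm⟩
      rcases hpres with rfl | ⟨hx0, hmem⟩ | ⟨_, hbig⟩
      · omega
      · left; exact ⟨x - 1, ⟨hmem, by omega⟩, by omega⟩
      · right; exact ⟨hxm, hkx, hbig⟩
    · rintro (⟨a, ⟨ha, hka⟩, rfl⟩ | ⟨hxm, hkx, hbig⟩)
      · have hmm := (mem_dS (r := r)).1 ha
        refine ⟨⟨by omega, Or.inr (Or.inl ⟨by omega, ?_⟩)⟩, by omega, by omega⟩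
        rw [show a + 1 - 1 = a by omega]; exact ha
      · exact ⟨⟨by omega, Or.inr (Or.inr ⟨hxm, hbig⟩)⟩, hkx, hxm⟩
  have hdisj : Disjoint (((dS r m u).filter fun a => k ≤ a + 1).image (· + 1))
      ((Finset.range m).filter (fun b => k ≤ b ∧ m < u b + r)) := by
    rw [Finset.disjoint_left]
    intro x hx hx2
    simp only [Finset.mem_filter, Finset.mem_image, Finset.mem_range] at hx hx2
    obtain ⟨a, ⟨ha, hka⟩, rfl⟩ := hx
    have hsm := mid_small (r := r) h1 (k := a + 1) ⟨by omega, by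
      rw [show a + 1 - 1 = a by omega]; exact ha⟩
    omega
  rw [hset, Finset.card_union_of_disjoint hdisj,
    Finset.card_image_of_injective _ (add_left_injective 1), filter_succ_card]
  rw [B]
  omega

include hr h1 in
lemma Δ_pres {k : ℕ} (hk : k ≤ m) (hp : pres r m u k) :
    Δ r m u k = ((K0 r m u).filter fun x => k ≤ x ∧ x < m).card := by
  classical
  rw [Δ, ← C1 hr h1 hk]
  by_cases hmid : 1 ≤ k ∧ k - 1 ∈ dS r m u
  · rw [if_pos hmid, if_pos hmid]
  · rw [if_neg hmid, if_neg hmid]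
    have : ¬ (k < m ∧ u k + r ≤ m) := by
      intro hsm
      rcases hp with h | h | h
      · omega
      · exact hmid h
      · omega
    rw [if_neg this]

include hr h1 in
lemma Δ_npres {k : ℕ} (hk : k ≤ m) (hp : ¬ pres r m u k) :
    Δ r m u k = ((K0 r m u).filter fun x => k ≤ x ∧ x < m).card + (k + 1) := by
  classical
  have hmid : ¬ (1 ≤ k ∧ k - 1 ∈ dS r m u) := by
    intro h; exact hp (Or.inr (Or.inl h))
  have hsm : k < m ∧ u k + r ≤ m := by
    rcases Nat.lt_or_ge k m with h | h
    · refine ⟨h, ?_⟩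
      by_contra hbig
      exact hp (Or.inr (Or.inr ⟨h, by omega⟩))
    · exact absurd (by omega : k = m) (fun he => hp (Or.inl he))
  rw [Δ, ← C1 hr h1 hk, if_neg hmid, if_neg hmid, if_pos hsm]
  omega


def K1 (r m : ℕ) (u : ℕ → ℕ) : Finset ℕ :=
  (Finset.range (m+1)).filter (fun x => ¬ pres r m u x)

lemma card_K0_add_K1 : (K0 r m u).card + (K1 r m u).card = m + 1 := by
  classical
  rw [K0, K1, Finset.card_filter_add_card_filter_not, Finset.card_range]

lemma K0_split {k : ℕ} (hk : k ≤ m) :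
    (K0 r m u).card = ((K0 r m u).filter (fun x => x < k)).card
      + ((K0 r m u).filter (fun x => k ≤ x ∧ x < m)).card + 1 := by
  classical
  have huni : K0 r m u = ((K0 r m u).filter (fun x => x < k))
      ∪ (((K0 r m u).filter (fun x => k ≤ x ∧ x < m)) ∪ {m}) := by
    ext x
    simp only [Finset.mem_union, Finset.mem_filter, Finset.mem_singleton]
    by_cases hx : x ∈ K0 r m u
    · have hxm : x ≤ m := (mem_K0.1 hx).1
      simp only [hx, true_and, true_iff]
      omega
    · simp only [hx, false_and, false_or, false_iff]
      rintro rfl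
      exact hx m_mem_K0
  have hd1 : Disjoint (((K0 r m u).filter (fun x => k ≤ x ∧ x < m))) ({m} : Finset ℕ) := by
    rw [Finset.disjoint_right]
    intro x hx hx2
    simp only [Finset.mem_singleton] at hx
    simp only [Finset.mem_filter] at hx2
    omega
  have hd2 : Disjoint ((K0 r m u).filter (fun x => x < k))
      (((K0 r m u).filter (fun x => k ≤ x ∧ x < m)) ∪ {m}) := by
    rw [Finset.disjoint_left]
    intro x hx hx2
    simp only [Finset.mem_filter] at hx
    simp only [Finset.mem_union, Finset.mem_filter, Finset.mem_singleton] at hx2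
    omega
  have hcc := congrArg Finset.card huni
  rw [Finset.card_union_of_disjoint hd2, Finset.card_union_of_disjoint hd1,
    Finset.card_singleton] at hcc
  omega

include hr h1 in
lemma Δ_npres' {k : ℕ} (hk : k ≤ m) (hp : ¬ pres r m u k) :
    Δ r m u k + 1 = (K0 r m u).card + ((K1 r m u).filter (fun x => x < k + 1)).card := by
  classical
  rw [Δ_npres hr h1 hk hp]
  have hkK0 : k ∉ K0 r m u := fun h => hp (mem_K0.1 h).2
  have e1 : ((K0 r m u).filter (fun x => x < k + 1)) = ((K0 r m u).filter (fun x => x < k)) := by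
    ext x
    simp only [Finset.mem_filter]
    constructor
    · rintro ⟨hx, hlt⟩
      refine ⟨hx, ?_⟩
      rcases Nat.lt_or_ge x k with h | h
      · exact h
      · exfalso; have : x = k := by omega
        subst this; exact hkK0 hx
    · rintro ⟨hx, hlt⟩; exact ⟨hx, by omega⟩
  have e2 : ((K0 r m u).filter (fun x => x < k + 1)).card
      + ((K1 r m u).filter (fun x => x < k + 1)).card = k + 1 := by
    have r1 : (K0 r m u).filter (fun x => x < k + 1) = (Finset.range (k+1)).filter (pres r m u) := by
      ext x; simp only [K0, Finset.mem_filter, Finset.mem_range]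
      constructor
      · rintro ⟨⟨h1x, h2⟩, h3⟩; exact ⟨h3, h2⟩
      · rintro ⟨h3, h2⟩; exact ⟨⟨by omega, h2⟩, h3⟩
    have r2 : (K1 r m u).filter (fun x => x < k + 1)
        = (Finset.range (k+1)).filter (fun x => ¬ pres r m u x) := by
      ext x; simp only [K1, Finset.mem_filter, Finset.mem_range]
      constructor
      · rintro ⟨⟨h1x, h2⟩, h3⟩; exact ⟨h3, h2⟩
      · rintro ⟨h3, h2⟩; exact ⟨⟨by omega, h2⟩, h3⟩
    rw [r1, r2, Finset.card_filter_add_card_filter_not, Finset.card_range]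
  have e3 := K0_split (r := r) (m := m) (u := u) hk
  rw [e1] at e2
  omega

include hr h1 in
lemma Δ_lt_of_lt_pres {k k' : ℕ} (hk' : k' ≤ m) (hlt : k < k')
    (hp : pres r m u k) (hp' : pres r m u k') : Δ r m u k' < Δ r m u k := by
  classical
  rw [Δ_pres hr h1 (by omega) hp, Δ_pres hr h1 hk' hp']
  apply Finset.card_lt_card
  rw [Finset.ssubset_iff_of_subset]
  · exact ⟨k, by simp only [Finset.mem_filter]; exact ⟨mem_K0.2 ⟨by omega, hp⟩, le_refl k, by omega⟩,
      by simp only [Finset.mem_filter]; push_neg; intro _ h; omega⟩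
  · apply Finset.monotone_filter_right
    rintro x _ ⟨hx1, hx2⟩
    exact ⟨by omega, hx2⟩

include hr h1 in
lemma Δ_lt_of_lt_npres {k k' : ℕ} (hk' : k' ≤ m) (hlt : k < k')
    (hp : ¬ pres r m u k) (hp' : ¬ pres r m u k') : Δ r m u k < Δ r m u k' := by
  classical
  have e1 := Δ_npres' hr h1 (by omega : k ≤ m) hp
  have e2 := Δ_npres' hr h1 hk' hp'
  have hss : ((K1 r m u).filter (fun x => x < k + 1)).card
      < ((K1 r m u).filter (fun x => x < k' + 1)).card := by
    apply Finset.card_lt_card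
    rw [Finset.ssubset_iff_of_subset]
    · refine ⟨k', ?_, ?_⟩
      · simp only [K1, Finset.mem_filter, Finset.mem_range]
        exact ⟨⟨by omega, hp'⟩, by omega⟩
      · simp only [Finset.mem_filter]; push_neg; intro _; omega
    · apply Finset.monotone_filter_right
      intro x hx
      omega
  omega

include hr h1 in
lemma Δ_mixed {k k' : ℕ} (hk : k ≤ m) (hk' : k' ≤ m)
    (hp : pres r m u k) (hp' : ¬ pres r m u k') : Δ r m u k < Δ r m u k' := by
  classical
  have e1 := Δ_pres hr h1 hk hp
  have e2 := Δ_npres' hr h1 hk' hp'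
  have hE : 1 ≤ ((K1 r m u).filter (fun x => x < k' + 1)).card := by
    rw [Nat.one_le_iff_ne_zero, ← Nat.pos_iff_ne_zero, Finset.card_pos]
    refine ⟨k', ?_⟩
    simp only [K1, Finset.mem_filter, Finset.mem_range]
    exact ⟨⟨by omega, hp'⟩, by omega⟩
  have hb : Δ r m u k < (K0 r m u).card := by
    rw [e1]
    have := K0_split (r := r) (m := m) (u := u) hk
    omega
  omega

include hr h1 in
lemma Δ_inj {k k' : ℕ} (hk : k ≤ m) (hk' : k' ≤ m) (he : Δ r m u k = Δ r m u k') :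
    k = k' := by
  classical
  by_cases hp : pres r m u k <;> by_cases hp' : pres r m u k'
  · rcases lt_trichotomy k k' with h | h | h
    · have := Δ_lt_of_lt_pres hr h1 hk' h hp hp'; omega
    · exact h
    · have := Δ_lt_of_lt_pres hr h1 hk h hp' hp; omega
  · have := Δ_mixed hr h1 hk hk' hp hp'; omega
  · have := Δ_mixed hr h1 hk' hk hp' hp; omega
  · rcases lt_trichotomy k k' with h | h | h
    · have := Δ_lt_of_lt_npres hr h1 hk' h hp hp'; omega
    · exact h
    · have := Δ_lt_of_lt_npres hr h1 hk h hp' hp; omega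

include hr h1 in
lemma Δ_le {k : ℕ} (hk : k ≤ m) : Δ r m u k ≤ m := by
  classical
  have hcard := card_K0_add_K1 (r := r) (m := m) (u := u)
  by_cases hp : pres r m u k
  · have e1 := Δ_pres hr h1 hk hp
    have hb := K0_split (r := r) (m := m) (u := u) hk
    have : (K0 r m u).card ≤ m + 1 := by omega
    omega
  · have e1 := Δ_npres' hr h1 hk hp
    have hE : ((K1 r m u).filter (fun x => x < k + 1)).card ≤ (K1 r m u).card :=
      Finset.card_le_card (Finset.filter_subset _ _)
    omega

include hr h1 in
lemma Δ_surj {c : ℕ} (hc : c ≤ m) : ∃ k, k ≤ m ∧ Δ r m u k = c := by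
  classical
  have himg : (Finset.range (m+1)).image (Δ r m u) = Finset.range (m+1) := by
    apply Finset.eq_of_subset_of_card_le
    · intro x hx
      simp only [Finset.mem_image, Finset.mem_range] at hx ⊢
      obtain ⟨k, hk, rfl⟩ := hx
      have := Δ_le hr h1 (by omega : k ≤ m)
      omega
    · rw [Finset.card_image_of_injOn]
      intro x hx y hy he
      simp only [Finset.mem_coe, Finset.mem_range] at hx hy
      exact Δ_inj hr h1 (by omega) (by omega) he
  have : c ∈ (Finset.range (m+1)).image (Δ r m u) := by
    rw [himg]; simp only [Finset.mem_range]; omega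
  simp only [Finset.mem_image, Finset.mem_range] at this
  obtain ⟨k, hk, he⟩ := this
  exact ⟨k, by omega, he⟩


variable (hinj : ∀ i, i < m → ∀ j, j < m → u i = u j → i = j)

include hr h1 in
lemma K0_card_eq : (K0 r m u).card = (dS r m u).card + B r m u 0 + 1 := by
  classical
  have hC := C1 hr h1 (k := 0) (Nat.zero_le m)
  rw [if_neg (by omega : ¬ (1 ≤ 0 ∧ 0 - 1 ∈ dS r m u))] at hC
  have h2 : (dS r m u).filter (fun a => 0 ≤ a) = dS r m u :=
    Finset.filter_true_of_mem (fun x _ => Nat.zero_le x)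
  rw [h2] at hC
  have h3 := K0_split (r := r) (m := m) (u := u) (Nat.zero_le m)
  have h4 : ((K0 r m u).filter (fun x => x < 0)).card = 0 := by
    rw [Finset.card_eq_zero, Finset.filter_eq_empty_iff]
    intro x _
    omega
  omega

include h1 hinj in
lemma injOn_u {s : Finset ℕ} (hs : s ⊆ Finset.range m) : Set.InjOn u ↑s := by
  intro x hx y hy he
  simp only [Finset.mem_coe] at hx hy
  have hx' := hs hx
  have hy' := hs hy
  simp only [Finset.mem_range] at hx' hy'
  exact hinj x hx' y hy' he

include h1 hinj in
lemma B0_le : B r m u 0 ≤ r - 1 := by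
  classical
  have hsub : (Finset.range m).filter (fun b => 0 ≤ b ∧ m < u b + r) ⊆ Finset.range m :=
    Finset.filter_subset _ _
  have hBe : B r m u 0
      = (((Finset.range m).filter (fun b => 0 ≤ b ∧ m < u b + r)).image u).card := by
    rw [B, Finset.card_image_of_injOn (injOn_u h1 hinj hsub)]
  have himg : ((Finset.range m).filter (fun b => 0 ≤ b ∧ m < u b + r)).image u
      ⊆ Finset.Ico (m + 1 - r) m := by
    intro v hv
    simp only [Finset.mem_image, Finset.mem_filter, Finset.mem_range] at hv
    obtain ⟨b, ⟨hb, _, hbig⟩, rfl⟩ := hv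
    have := h1 b hb
    simp only [Finset.mem_Ico]
    omega
  have hle := Finset.card_le_card himg
  rw [Nat.card_Ico] at hle
  omega

include h1 hinj in
lemma image_u_range : (Finset.range m).image u = Finset.range m := by
  classical
  apply Finset.eq_of_subset_of_card_le
  · intro v hv
    simp only [Finset.mem_image, Finset.mem_range] at hv ⊢
    obtain ⟨b, hb, rfl⟩ := hv
    exact h1 b hb
  · rw [Finset.card_image_of_injOn (injOn_u h1 hinj (subset_refl _)), Finset.card_range]

include h1 hinj in
lemma B0_ge (hrm : r ≤ m) : r - 1 ≤ B r m u 0 := by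
  classical
  have hsub2 : Finset.Ico (m + 1 - r) m
      ⊆ ((Finset.range m).filter (fun b => 0 ≤ b ∧ m < u b + r)).image u := by
    intro v hv
    simp only [Finset.mem_Ico] at hv
    have hv2 : v ∈ (Finset.range m).image u := by
      rw [image_u_range h1 hinj]
      simp only [Finset.mem_range]
      omega
    simp only [Finset.mem_image, Finset.mem_range] at hv2
    obtain ⟨b, hb, rfl⟩ := hv2
    simp only [Finset.mem_image, Finset.mem_filter, Finset.mem_range]
    exact ⟨b, ⟨hb, Nat.zero_le b, by omega⟩, rfl⟩
  have hle := Finset.card_le_card hsub2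
  rw [Nat.card_Ico] at hle
  have hle2 := Finset.card_image_le
    (s := (Finset.range m).filter (fun b => 0 ≤ b ∧ m < u b + r)) (f := u)
  rw [B]
  omega

include hr h1 hinj in
lemma threshold {k : ℕ} (hk : k ≤ m) :
    pres r m u k ↔ Δ r m u k + 1 ≤ (dS r m u).card + r := by
  classical
  have hK := K0_card_eq hr h1 (r := r)
  have hB0 := B0_le h1 hinj (r := r)
  constructor
  · intro hp
    have e1 := Δ_pres hr h1 hk hp
    have hb := K0_split (r := r) (m := m) (u := u) hk
    omega
  · intro hle
    by_contra hp
    have hrm : r ≤ m := by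
      have hmid : ¬ (1 ≤ k ∧ k - 1 ∈ dS r m u) := fun h => hp (Or.inr (Or.inl h))
      have hkm : k < m := by
        rcases Nat.lt_or_ge k m with h | h
        · exact h
        · exact absurd (Or.inl (by omega : k = m)) hp
      have hsm : u k + r ≤ m := by
        by_contra hbig
        exact hp (Or.inr (Or.inr ⟨hkm, by omega⟩))
      omega
    have hB0' := B0_ge h1 hinj hrm
    have e1 := Δ_npres' hr h1 hk hp
    have hE : 1 ≤ ((K1 r m u).filter (fun x => x < k + 1)).card := by
      rw [Nat.one_le_iff_ne_zero, ← Nat.pos_iff_ne_zero, Finset.card_pos]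
      refine ⟨k, ?_⟩
      simp only [K1, Finset.mem_filter, Finset.mem_range]
      exact ⟨⟨by omega, hp⟩, by omega⟩
    omega


end core
end Raw

/-- the word (one-line notation) of a permutation, as a function ℕ → ℕ -/
def wordOf {N : ℕ} (σ : Perm (Fin N)) : ℕ → ℕ :=
  fun i => if h : i < N then (σ ⟨i, h⟩ : ℕ) else 0

lemma wordOf_lt {N : ℕ} (σ : Perm (Fin N)) {i : ℕ} (h : i < N) :
    wordOf σ i = (σ ⟨i, h⟩ : ℕ) := dif_pos h

lemma h1_wordOf {m : ℕ} (π : Perm (Fin m)) : ∀ i, i < m → wordOf π i < m := by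
  intro i hi
  rw [wordOf_lt π hi]
  exact (π ⟨i, hi⟩).isLt

lemma hinj_wordOf {m : ℕ} (π : Perm (Fin m)) :
    ∀ i, i < m → ∀ j, j < m → wordOf π i = wordOf π j → i = j := by
  intro i hi j hj he
  rw [wordOf_lt π hi, wordOf_lt π hj] at he
  have := π.injective (Fin.ext he)
  simpa [Fin.ext_iff] using this

lemma rdes_transfer {N : ℕ} (r : ℕ) (σ : Perm (Fin N)) :
    rdes r σ = (Raw.dS r N (wordOf σ)).card := by
  classical
  rw [rdes, desSet]
  apply Finset.card_bij (i := fun (p : Fin N × Fin N) _ => (p.1 : ℕ))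
  · rintro ⟨p1, p2⟩ hp
    simp only [Finset.mem_filter, Finset.mem_univ, true_and] at hp
    obtain ⟨hpe, hpd⟩ := hp
    rw [Raw.mem_dS]
    have h2 : ((p1 : ℕ) + 1) < N := by rw [← hpe]; exact p2.isLt
    refine ⟨h2, ?_⟩
    rw [wordOf_lt σ h2, wordOf_lt σ p1.isLt]
    have : (⟨(p1 : ℕ) + 1, h2⟩ : Fin N) = p2 := by
      apply Fin.ext; simp [hpe]
    rw [this]
    simpa using hpd
  · rintro ⟨p1, p2⟩ hp ⟨q1, q2⟩ hq he
    simp only [Finset.mem_filter, Finset.mem_univ, true_and] at hp hq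
    simp only at he
    have e1 : p1 = q1 := Fin.ext he
    have e2 : p2 = q2 := by apply Fin.ext; omega
    rw [e1, e2]
  · intro i hi
    rw [Raw.mem_dS] at hi
    obtain ⟨hiN, hid⟩ := hi
    refine ⟨(⟨i, by omega⟩, ⟨i + 1, hiN⟩), ?_, rfl⟩
    simp only [Finset.mem_filter, Finset.mem_univ, true_and]
    rw [wordOf_lt σ hiN, wordOf_lt σ (by omega : i < N)] at hid
    exact hid

lemma rmaj_transfer {N : ℕ} (r : ℕ) (σ : Perm (Fin N)) :
    rmaj r σ = Raw.nrmaj r N (wordOf σ) := by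
  classical
  rw [rmaj, Raw.nrmaj]
  congr 1
  · -- sum part
    rw [Raw.nmaj]
    apply Finset.sum_bij (i := fun (p : Fin N × Fin N) _ => (p.1 : ℕ))
    · rintro ⟨p1, p2⟩ hp
      simp only [desSet, Finset.mem_filter, Finset.mem_univ, true_and] at hp
      obtain ⟨hpe, hpd⟩ := hp
      rw [Raw.mem_dS]
      have h2 : ((p1 : ℕ) + 1) < N := by rw [← hpe]; exact p2.isLt
      refine ⟨h2, ?_⟩
      rw [wordOf_lt σ h2, wordOf_lt σ p1.isLt]
      have : (⟨(p1 : ℕ) + 1, h2⟩ : Fin N) = p2 := by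
        apply Fin.ext; simp [hpe]
      rw [this]
      simpa using hpd
    · rintro ⟨p1, p2⟩ hp ⟨q1, q2⟩ hq he
      simp only [desSet, Finset.mem_filter, Finset.mem_univ, true_and] at hp hq
      simp only at he
      have e1 : p1 = q1 := Fin.ext he
      have e2 : p2 = q2 := by apply Fin.ext; omega
      rw [e1, e2]
    · intro i hi
      rw [Raw.mem_dS] at hi
      obtain ⟨hiN, hid⟩ := hi
      refine ⟨(⟨i, by omega⟩, ⟨i + 1, hiN⟩), ?_, rfl⟩
      simp only [desSet, Finset.mem_filter, Finset.mem_univ, true_and]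
      rw [wordOf_lt σ hiN, wordOf_lt σ (by omega : i < N)] at hid
      exact hid
    · intros; rfl
  · -- inversion part
    rw [Raw.nInv]
    apply Finset.card_bij (i := fun (p : Fin N × Fin N) _ => ((p.1 : ℕ), (p.2 : ℕ)))
    · rintro ⟨p1, p2⟩ hp
      simp only [Finset.mem_filter, Finset.mem_univ, true_and] at hp
      obtain ⟨hlt, hv1, hv2⟩ := hp
      simp only [Finset.mem_filter, Finset.mem_product, Finset.mem_range]
      rw [wordOf_lt σ p1.isLt, wordOf_lt σ p2.isLt]
      refine ⟨⟨p1.isLt, p2.isLt⟩, ?_, ?_, ?_⟩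
      · exact hlt
      · simpa using hv1
      · simpa using hv2
    · rintro ⟨p1, p2⟩ hp ⟨q1, q2⟩ hq he
      simp only [Prod.mk.injEq] at he
      have e1 : p1 = q1 := Fin.ext he.1
      have e2 : p2 = q2 := Fin.ext he.2
      rw [e1, e2]
    · rintro ⟨a, b⟩ hab
      simp only [Finset.mem_filter, Finset.mem_product, Finset.mem_range] at hab
      obtain ⟨⟨ha, hb⟩, hlt, hv1, hv2⟩ := hab
      refine ⟨(⟨a, ha⟩, ⟨b, hb⟩), ?_, rfl⟩
      simp only [Finset.mem_filter, Finset.mem_univ, true_and]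
      rw [wordOf_lt σ ha, wordOf_lt σ hb] at hv1 hv2
      exact ⟨hlt, by simpa using hv1, by simpa using hv2⟩

section insertion
variable {m : ℕ}

/-- insertion of the largest letter at slot k -/
def insFun (π : Perm (Fin m)) (k : Fin (m+1)) : Fin (m+1) → Fin (m+1) :=
  fun i =>
    if h1 : (i : ℕ) < (k : ℕ) then
      (π ⟨(i : ℕ), by have := k.isLt; omega⟩).castSucc
    else if h2 : (i : ℕ) = (k : ℕ) then Fin.last m
    else (π ⟨(i : ℕ) - 1, by have := i.isLt; omega⟩).castSucc

lemma insFun_injective (π : Perm (Fin m)) (k : Fin (m+1)) :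
    Function.Injective (insFun π k) := by
  intro a b heq
  have ha := a.isLt
  have hb := b.isLt
  have hkl := k.isLt
  unfold insFun at heq
  have hval := congrArg Fin.val heq
  apply Fin.ext
  have hinj := hinj_wordOf π
  have hbnd := h1_wordOf π
  split_ifs at hval with c1 c2 c3 c4 c5 c6 c7 c8 <;>
    simp only [Fin.coe_castSucc, Fin.val_last] at hval
  · -- a<k, b<k
    have := hinj (a : ℕ) (by omega) (b : ℕ) (by omega) (by
      rw [wordOf_lt π (show (a:ℕ) < m by omega), wordOf_lt π (show (b:ℕ) < m by omega)]
      exact hval)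
    omega
  · -- a<k, b=k
    exfalso
    have h2 : wordOf π (a : ℕ) = m := by
      rw [wordOf_lt π (show (a:ℕ) < m by omega)]; exact hval
    have := hbnd (a : ℕ) (by omega)
    omega
  · -- a<k, b>k
    have := hinj (a : ℕ) (by omega) ((b : ℕ) - 1) (by omega) (by
      rw [wordOf_lt π (show (a:ℕ) < m by omega), wordOf_lt π (show (b:ℕ) - 1 < m by omega)]
      exact hval)
    omega
  · -- a=k, b<k
    exfalso
    have h2 : wordOf π (b : ℕ) = m := by
      rw [wordOf_lt π (show (b:ℕ) < m by omega)]; exact hval.symm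
    have := hbnd (b : ℕ) (by omega)
    omega
  · -- a=k, b=k
    omega
  · -- a=k, b>k
    exfalso
    have h2 : wordOf π ((b : ℕ) - 1) = m := by
      rw [wordOf_lt π (show (b:ℕ) - 1 < m by omega)]; exact hval.symm
    have := hbnd ((b : ℕ) - 1) (by omega)
    omega
  · -- a>k, b<k
    have := hinj ((a : ℕ) - 1) (by omega) (b : ℕ) (by omega) (by
      rw [wordOf_lt π (show (a:ℕ) - 1 < m by omega), wordOf_lt π (show (b:ℕ) < m by omega)]
      exact hval)
    omega
  · -- a>k, b=k
    exfalso
    have h2 : wordOf π ((a : ℕ) - 1) = m := by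
      rw [wordOf_lt π (show (a:ℕ) - 1 < m by omega)]; exact hval
    have := hbnd ((a : ℕ) - 1) (by omega)
    omega
  · -- a>k, b>k
    have := hinj ((a : ℕ) - 1) (by omega) ((b : ℕ) - 1) (by omega) (by
      rw [wordOf_lt π (show (a:ℕ) - 1 < m by omega), wordOf_lt π (show (b:ℕ) - 1 < m by omega)]
      exact hval)
    omega

/-- insertion as a permutation -/
noncomputable def insPerm (π : Perm (Fin m)) (k : Fin (m+1)) : Perm (Fin (m+1)) :=
  Equiv.ofBijective (insFun π k)
    ((Finite.injective_iff_bijective).1 (insFun_injective π k))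

lemma insPerm_apply (π : Perm (Fin m)) (k : Fin (m+1)) (i : Fin (m+1)) :
    insPerm π k i = insFun π k i := rfl

lemma wordOf_insPerm (π : Perm (Fin m)) (k : Fin (m+1)) :
    wordOf (insPerm π k) = Raw.wins (wordOf π) m (k : ℕ) := by
  funext i
  have hkl := k.isLt
  by_cases hi : i < m + 1
  · rw [wordOf_lt _ hi]
    rw [show (insPerm π k ⟨i, hi⟩ : ℕ) = (insFun π k ⟨i, hi⟩ : ℕ) from rfl]
    unfold insFun Raw.wins
    by_cases c1 : i < (k : ℕ)
    · rw [dif_pos c1, if_pos c1, wordOf_lt π (by omega : i < m)]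
      simp
    · rw [dif_neg c1]
      by_cases c2 : i = (k : ℕ)
      · rw [dif_pos c2, if_neg c1, if_pos c2]
        simp
      · rw [dif_neg c2, if_neg c1, if_neg c2, wordOf_lt π (by omega : i - 1 < m)]
        simp
  · have e1 : wordOf (insPerm π k) i = 0 := dif_neg hi
    have e2 : Raw.wins (wordOf π) m (k : ℕ) i = wordOf π (i - 1) := by
      unfold Raw.wins
      rw [if_neg (by omega), if_neg (by omega)]
    rw [e1, e2, wordOf]
    rw [dif_neg (by omega)]

lemma insPerm_self (π : Perm (Fin m)) (k : Fin (m+1)) :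
    insPerm π k k = Fin.last m := by
  rw [insPerm_apply]
  unfold insFun
  rw [dif_neg (by omega), dif_pos rfl]

lemma insPerm_inj {π π' : Perm (Fin m)} {k k' : Fin (m+1)}
    (h : insPerm π k = insPerm π' k') : π = π' ∧ k = k' := by
  have hkl := k.isLt
  have hkl' := k'.isLt
  have hkk : k = k' := by
    by_contra hne
    have hne' : (k : ℕ) ≠ (k' : ℕ) := fun he => hne (Fin.ext he)
    have h1 := insPerm_self π k
    rw [h] at h1
    have hval := congrArg Fin.val h1
    rw [show insPerm π' k' k = insFun π' k' k from rfl] at hval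
    unfold insFun at hval
    by_cases hlt : (k : ℕ) < (k' : ℕ)
    · rw [dif_pos hlt] at hval
      simp only [Fin.coe_castSucc, Fin.val_last] at hval
      have h3 : wordOf π' (k : ℕ) = m := by
        rw [wordOf_lt π' (show (k:ℕ) < m by omega)]; exact hval
      have := h1_wordOf π' (k : ℕ) (by omega)
      omega
    · rw [dif_neg hlt, dif_neg hne'] at hval
      simp only [Fin.coe_castSucc, Fin.val_last] at hval
      have h3 : wordOf π' ((k : ℕ) - 1) = m := by
        rw [wordOf_lt π' (show (k:ℕ) - 1 < m by omega)]; exact hval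
      have := h1_wordOf π' ((k : ℕ) - 1) (by omega)
      omega
  subst hkk
  refine ⟨?_, rfl⟩
  apply Equiv.ext
  intro j
  have hjv := j.isLt
  by_cases hj : (j : ℕ) < (k : ℕ)
  · have e1 : insPerm π k (Fin.castSucc j) = (π j).castSucc := by
      rw [insPerm_apply]; unfold insFun
      rw [dif_pos (by simpa using hj)]
      congr 1
    have e2 : insPerm π' k (Fin.castSucc j) = (π' j).castSucc := by
      rw [insPerm_apply]; unfold insFun
      rw [dif_pos (by simpa using hj)]
      congr 1
    rw [h] at e1
    rw [e1] at e2
    exact Fin.castSucc_injective m e2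
  · have e1 : insPerm π k j.succ = (π j).castSucc := by
      rw [insPerm_apply]; unfold insFun
      rw [dif_neg (by simp only [Fin.val_succ]; omega), dif_neg (by simp only [Fin.val_succ]; omega)]
      congr 1
    have e2 : insPerm π' k j.succ = (π' j).castSucc := by
      rw [insPerm_apply]; unfold insFun
      rw [dif_neg (by simp only [Fin.val_succ]; omega), dif_neg (by simp only [Fin.val_succ]; omega)]
      congr 1
    rw [h] at e1
    rw [e1] at e2
    exact Fin.castSucc_injective m e2

end insertion

/-- Rawlings's insertion lemma (n = m+1). -/
theorem rawlings_insertion (r m : ℕ) (hr : 1 ≤ r) :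
    ∃ φ : Perm (Fin m) × Fin (m + 1) → Perm (Fin (m + 1)),
      Function.Bijective φ ∧
      ∀ (π : Perm (Fin m)) (c : Fin (m + 1)),
        (((c : ℕ) + 1 ≤ rdes r π + r → rdes r (φ (π, c)) = rdes r π) ∧
         (rdes r π + r < (c : ℕ) + 1 → rdes r (φ (π, c)) = rdes r π + 1)) ∧
        rmaj r (φ (π, c)) = rmaj r π + (c : ℕ) := by
  classical
  have hex : ∀ (π : Perm (Fin m)) (c : Fin (m + 1)),
      ∃ k, k ≤ m ∧ Raw.Δ r m (wordOf π) k = (c : ℕ) :=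
    fun π c => Raw.Δ_surj hr (h1_wordOf π) (by have := c.isLt; omega)
  choose K hK1 hK2 using hex
  refine ⟨fun pc => insPerm pc.1 ⟨K pc.1 pc.2, by have := hK1 pc.1 pc.2; omega⟩, ?_, ?_⟩
  · rw [Fintype.bijective_iff_injective_and_card]
    constructor
    · rintro ⟨π, c⟩ ⟨π', c'⟩ he
      simp only at he
      obtain ⟨hπ, hkf⟩ := insPerm_inj he
      subst hπ
      have hkv : K π c = K π c' := by
        have := congrArg Fin.val hkf
        simpa using this
      have hcv : (c : ℕ) = (c' : ℕ) := by
        rw [← hK2 π c, ← hK2 π c', hkv]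
      obtain rfl : c = c' := Fin.ext hcv
      rfl
    · rw [Fintype.card_prod, Fintype.card_perm, Fintype.card_perm, Fintype.card_fin,
        Fintype.card_fin, Nat.factorial_succ]
      ring
  · intro π c
    set k : Fin (m+1) := ⟨K π c, by have := hK1 π c; omega⟩ with hkdef
    have hk : (k : ℕ) ≤ m := hK1 π c
    have hΔ : Raw.Δ r m (wordOf π) (k : ℕ) = (c : ℕ) := hK2 π c
    have hword : wordOf (insPerm π k) = Raw.wins (wordOf π) m (k : ℕ) := wordOf_insPerm π k
    have hrd : rdes r (insPerm π k)
        = (Raw.dS r m (wordOf π)).card + (if Raw.pres r m (wordOf π) (k : ℕ) then 0 else 1) := by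
      rw [rdes_transfer r (insPerm π k), hword]
      exact Raw.rdes_wins hr (h1_wordOf π) hk
    have hthr := Raw.threshold hr (h1_wordOf π) (hinj_wordOf π) hk
    have hrdeq : rdes r π = (Raw.dS r m (wordOf π)).card := rdes_transfer r π
    refine ⟨⟨?_, ?_⟩, ?_⟩
    · intro hle
      have hpres : Raw.pres r m (wordOf π) (k : ℕ) := by
        rw [hthr]; omega
      rw [hrd, if_pos hpres, hrdeq]
      omega
    · intro hgt
      have hpres : ¬ Raw.pres r m (wordOf π) (k : ℕ) := by
        rw [hthr]; omega
      rw [hrd, if_neg hpres, hrdeq]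
    · rw [rmaj_transfer r (insPerm π k), rmaj_transfer r π, hword,
        Raw.nrmaj_wins hr (h1_wordOf π) hk, hΔ]

end

end PaperStat
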